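/- arXiv:math/0606551 — 2 statements merged into one kernel-verified Lean document; each statement's English description precedes it below -/
import Mathlib

section
/- Let K be a relatively compact subset of L^∞(𝕋). Let 𝓔_K be the set of all functions u : 𝕋 × 𝕋 → ℂ of the form u(ζ,w) = Σ_{n=−M}^{M} ζ^n v_n(w) (M ∈ ℕ), where each v_n : 𝕋 → ℂ is essentially bounded and where, for every ζ ∈ 𝕋, the element Σ_{n=−M}^{M} ζ^n 𝐯_n of L^∞(𝕋) (with 𝐯_n the equivalence class of v_n) belongs to K. For δ > 0 define ρ_K(δ) = sup{ ∫_𝕋 |u(w, z₁w) − u(w, z₂w)| dμ(w) : u ∈ 𝓔_K, z₁, z₂ ∈ 𝕋, d(z₁,z₂) ≤ δ }. Then lim_{δ→0} ρ_K(δ) = 0. -/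
open MeasureTheory Complex Filter Set
noncomputable section

instance fact2pi : Fact (0 < 2 * Real.pi) := ⟨Real.two_pi_pos⟩

/-- The circle `𝕋 = ℝ/2πℤ` with arc-length measure `volume` (total mass `2π`); the point
`e^{it} ∈ 𝕋` corresponds to `(t : Tc)`, multiplication of points of `𝕋` corresponds to
addition in `Tc`, `ζ^n` corresponds to `fourier n ζ`, and the arc-length distance `d` is the
distance of the metric of `Tc`. -/
abbrev Tc := AddCircle (2 * Real.pi)

/-- `u ∈ 𝓔_K` : `u(ζ,w) = ∑_{n=-M}^M ζⁿ v_n(w)` with each `v_n` essentially bounded, and for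
every `ζ ∈ 𝕋` the element `∑_{n=-M}^M ζⁿ 𝐯_n` of `L^∞(𝕋)` belongs to `K`. -/
def MemEK (K : Set (Lp ℂ ⊤ (volume : Measure Tc))) (u : Tc → Tc → ℂ) : Prop :=
  ∃ (M : ℕ) (v : ℤ → Tc → ℂ) (hv : ∀ n, MemLp (v n) ⊤ (volume : Measure Tc)),
    (∀ ζ w, u ζ w = ∑ n ∈ Finset.Icc (-(M : ℤ)) M, fourier n ζ * v n w) ∧
    (∀ ζ : Tc,
      (∑ n ∈ Finset.Icc (-(M : ℤ)) M, fourier n ζ • MemLp.toLp (v n) (hv n)) ∈ K)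

/-- `ρ_K(δ)`. -/
noncomputable def rhoK (K : Set (Lp ℂ ⊤ (volume : Measure Tc))) (δ : ℝ) : ℝ :=
  sSup {c : ℝ | ∃ u : Tc → Tc → ℂ, MemEK K u ∧ ∃ z₁ z₂ : Tc, dist z₁ z₂ ≤ δ ∧
    c = ∫ w : Tc, ‖u w (z₁ + w) - u w (z₂ + w)‖}

open scoped ENNReal NNReal

section Aux

def addCM (z : Tc) : C(Tc, Tc) := ⟨fun w => z + w, by fun_prop⟩
lemma addCM_mp (z : Tc) : MeasurePreserving (addCM z) (volume : Measure Tc) volume :=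
  measurePreserving_add_left volume z

lemma ae_bound_of_memTop {g : Tc → ℂ} (hg : MemLp g ⊤ (volume : Measure Tc)) :
    ∀ᵐ x : Tc, ‖g x‖ ≤ (eLpNorm g ⊤ (volume : Measure Tc)).toReal := by
  filter_upwards [ae_le_eLpNormEssSup (f := g) (μ := (volume : Measure Tc))] with x hx
  have h2 : eLpNormEssSup g (volume : Measure Tc) = eLpNorm g ⊤ (volume : Measure Tc) :=
    (eLpNorm_exponent_top (f := g)).symm
  have hne : eLpNorm g ⊤ (volume : Measure Tc) ≠ ⊤ := hg.2.ne
  calc ‖g x‖ = ((‖g x‖₊ : ℝ≥0∞)).toReal := by simp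
    _ ≤ (eLpNorm g ⊤ (volume : Measure Tc)).toReal := ENNReal.toReal_mono hne (h2 ▸ hx)

lemma ae_bound_Lp (f : Lp ℂ ⊤ (volume : Measure Tc)) :
    ∀ᵐ x : Tc, ‖(f : Tc → ℂ) x‖ ≤ ‖f‖ := by
  have := ae_bound_of_memTop (Lp.memLp f)
  rwa [← Lp.norm_def] at this

lemma Lp_coeFn_sum {ι : Type*} (s : Finset ι) {p : ℝ≥0∞} (F : ι → Lp ℂ p (volume : Measure Tc)) :
    ⇑(∑ i ∈ s, F i) =ᵐ[(volume : Measure Tc)] fun x => ∑ i ∈ s, (F i : Tc → ℂ) x := by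
  classical
  induction s using Finset.induction_on with
  | empty => simp only [Finset.sum_empty]; exact Lp.coeFn_zero ℂ p (volume : Measure Tc)
  | insert a s hni ih =>
    rw [Finset.sum_insert hni]
    filter_upwards [Lp.coeFn_add (F a) (∑ i ∈ s, F i), ih] with x hx1 hx2
    rw [hx1, Pi.add_apply, hx2]
    simp [Finset.sum_insert hni]

lemma keyBound (K : Set (Lp ℂ ⊤ (volume : Measure Tc))) (u : Tc → Tc → ℂ) (hu : MemEK K u)
    (z₁ z₂ : Tc) {ε₁ : ℝ} (hε₁ : 0 < ε₁)
    (T : Finset (Lp ℂ ⊤ (volume : Measure Tc)))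
    (hnet : ∀ g ∈ K, ∃ f ∈ T, dist g f < ε₁) :
    ∫ w : Tc, ‖u w (z₁ + w) - u w (z₂ + w)‖ ≤
      4 * ε₁ * (volume (univ : Set Tc)).toReal +
      ∑ f ∈ T, ∫ w : Tc, ‖(f : Tc → ℂ) (z₁ + w) - (f : Tc → ℂ) (z₂ + w)‖ := by
  classical
  obtain ⟨M, v, hv, hrep, hmem⟩ := hu
  set I := Finset.Icc (-(M : ℤ)) (M : ℤ) with hI
  set B : ℤ → ℝ := fun n => (eLpNorm (v n) ⊤ (volume : Measure Tc)).toReal with hB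
  set G : Tc → Tc → ℂ := fun ζ x => ∑ n ∈ I, fourier n ζ * v n x with hG
  set φ : Tc → Lp ℂ ⊤ (volume : Measure Tc) :=
    fun ζ => ∑ n ∈ I, fourier n ζ • MemLp.toLp (v n) (hv n) with hφ
  set c : Tc → Tc → ℝ := fun ζ ζ' => ∑ n ∈ I, ‖(fourier n ζ : ℂ) - fourier n ζ'‖ * B n with hc
  have hB0 : ∀ n, 0 ≤ B n := fun n => ENNReal.toReal_nonneg
  -- finite subcover
  have hcopen : ∀ ζ' : Tc, IsOpen {ζ : Tc | c ζ ζ' < ε₁} := by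
    intro ζ'
    apply isOpen_lt ?_ continuous_const
    exact continuous_finset_sum _ fun n _ =>
      (((map_continuous (fourier n)).sub continuous_const).norm).mul continuous_const
  have hcover : (univ : Set Tc) ⊆ ⋃ ζ' : Tc, {ζ : Tc | c ζ ζ' < ε₁} := by
    intro ζ _
    refine mem_iUnion.2 ⟨ζ, ?_⟩
    simp only [mem_setOf_eq, hc, sub_self, norm_zero, zero_mul, Finset.sum_const_zero]
    exact hε₁
  obtain ⟨Z, hZ⟩ := isCompact_univ.elim_finite_subcover _ hcopen hcover
  -- net assignment
  have hsel : ∀ ζ' : Tc, ∃ f, f ∈ T ∧ dist (φ ζ') f < ε₁ := by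
    intro ζ'
    obtain ⟨f, hfT, hfd⟩ := hnet (φ ζ') (hmem ζ')
    exact ⟨f, hfT, hfd⟩
  choose fnet hfnetT hfnetd using hsel
  -- coeFn of φ
  have hφcoe : ∀ ζ' : Tc, ⇑(φ ζ') =ᵐ[(volume : Measure Tc)] G ζ' := by
    intro ζ'
    refine (Lp_coeFn_sum I _).trans ?_
    have h1 : ∀ n ∈ I, ⇑(fourier n ζ' • MemLp.toLp (v n) (hv n)) =ᵐ[(volume : Measure Tc)]
        fun x => fourier n ζ' * v n x := by
      intro n _
      filter_upwards [Lp.coeFn_smul (fourier n ζ' : ℂ) (MemLp.toLp (v n) (hv n)),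
        MemLp.coeFn_toLp (hv n)] with x hx1 hx2
      rw [hx1, Pi.smul_apply, hx2, smul_eq_mul]
    have h1' : ∀ᶠ x in ae (volume : Measure Tc), ∀ n ∈ I,
        (fourier n ζ' • MemLp.toLp (v n) (hv n) : Lp ℂ ⊤ (volume : Measure Tc)) x =
          fourier n ζ' * v n x := (Filter.eventually_all_finset I).2 h1
    filter_upwards [h1'] with x hx
    exact Finset.sum_congr rfl fun n hn => hx n hn
  -- (A)
  have hA : ∀ᵐ w : Tc ∂(volume : Measure Tc),
      ∀ n ∈ I, ‖v n (z₁ + w)‖ ≤ B n ∧ ‖v n (z₂ + w)‖ ≤ B n := by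
    rw [Filter.eventually_all_finset]
    intro n _
    have h := ae_bound_of_memTop (hv n)
    have h1 := (addCM_mp z₁).quasiMeasurePreserving.ae h
    have h2 := (addCM_mp z₂).quasiMeasurePreserving.ae h
    filter_upwards [h1, h2] with w hw1 hw2
    exact ⟨hw1, hw2⟩
  -- (B)
  have hGB : ∀ ζ' : Tc, ∀ᵐ x : Tc ∂(volume : Measure Tc),
      ‖G ζ' x - (fnet ζ' : Tc → ℂ) x‖ ≤ ε₁ := by
    intro ζ'
    filter_upwards [ae_bound_Lp (φ ζ' - fnet ζ'), Lp.coeFn_sub (φ ζ') (fnet ζ'), hφcoe ζ']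
      with x hx1 hx2 hx3
    have : ‖G ζ' x - (fnet ζ' : Tc → ℂ) x‖ = ‖((φ ζ' - fnet ζ' : Lp ℂ ⊤ (volume : Measure Tc)) :
        Tc → ℂ) x‖ := by rw [hx2, Pi.sub_apply, hx3]
    rw [this]
    refine hx1.trans ?_
    have : ‖φ ζ' - fnet ζ'‖ = dist (φ ζ') (fnet ζ') := (dist_eq_norm _ _).symm
    rw [this]
    exact (hfnetd ζ').le
  have hB' : ∀ᵐ w : Tc ∂(volume : Measure Tc), ∀ ζ' ∈ Z,
      ‖G ζ' (z₁ + w) - (fnet ζ' : Tc → ℂ) (z₁ + w)‖ ≤ ε₁ ∧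
      ‖G ζ' (z₂ + w) - (fnet ζ' : Tc → ℂ) (z₂ + w)‖ ≤ ε₁ := by
    rw [Filter.eventually_all_finset]
    intro ζ' _
    have h1 := (addCM_mp z₁).quasiMeasurePreserving.ae (hGB ζ')
    have h2 := (addCM_mp z₂).quasiMeasurePreserving.ae (hGB ζ')
    filter_upwards [h1, h2] with w hw1 hw2
    exact ⟨hw1, hw2⟩
  -- pointwise bound
  have hpt : ∀ᵐ w : Tc ∂(volume : Measure Tc),
      ‖u w (z₁ + w) - u w (z₂ + w)‖ ≤
        4 * ε₁ + ∑ f ∈ T, ‖(f : Tc → ℂ) (z₁ + w) - (f : Tc → ℂ) (z₂ + w)‖ := by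
    filter_upwards [hA, hB'] with w hAw hBw
    obtain ⟨ζ', hζ'Z, hcw⟩ : ∃ ζ' ∈ Z, c w ζ' < ε₁ := by
      have := hZ (mem_univ w)
      simpa only [mem_iUnion, mem_setOf_eq, exists_prop] using this
    set f := fnet ζ' with hf
    -- outer estimate
    have houter : ∀ z : Tc, (∀ n ∈ I, ‖v n (z + w)‖ ≤ B n) →
        ‖G w (z + w) - G ζ' (z + w)‖ ≤ ε₁ := by
      intro z hz
      have h1 : G w (z + w) - G ζ' (z + w) =
          ∑ n ∈ I, ((fourier n w : ℂ) - fourier n ζ') * v n (z + w) := by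
        simp only [hG, ← Finset.sum_sub_distrib, sub_mul]
      rw [h1]
      refine (norm_sum_le _ _).trans (le_trans ?_ hcw.le)
      refine Finset.sum_le_sum fun n hn => ?_
      rw [norm_mul]
      exact mul_le_mul_of_nonneg_left (hz n hn) (norm_nonneg _)
    have h₁ := houter z₁ fun n hn => (hAw n hn).1
    have h₂ := houter z₂ fun n hn => (hAw n hn).2
    have hm₁ := (hBw ζ' hζ'Z).1
    have hm₂ := (hBw ζ' hζ'Z).2
    have hm₂' : ‖(f : Tc → ℂ) (z₂ + w) - G ζ' (z₂ + w)‖ ≤ ε₁ := by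
      rw [norm_sub_rev]; exact hm₂
    have hfin : ‖(f : Tc → ℂ) (z₁ + w) - (f : Tc → ℂ) (z₂ + w)‖ ≤
        ∑ g ∈ T, ‖(g : Tc → ℂ) (z₁ + w) - (g : Tc → ℂ) (z₂ + w)‖ :=
      Finset.single_le_sum (f := fun g : Lp ℂ ⊤ (volume : Measure Tc) =>
        ‖(g : Tc → ℂ) (z₁ + w) - (g : Tc → ℂ) (z₂ + w)‖) (fun g _ => norm_nonneg _) (hfnetT ζ')
    have hchain : ‖G w (z₁ + w) - G w (z₂ + w)‖ ≤
        4 * ε₁ + ‖(f : Tc → ℂ) (z₁ + w) - (f : Tc → ℂ) (z₂ + w)‖ := by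
      have t1 : ‖G w (z₁ + w) - G w (z₂ + w)‖ ≤
          ‖G w (z₁ + w) - G ζ' (z₁ + w)‖ + ‖G ζ' (z₁ + w) - (f : Tc → ℂ) (z₁ + w)‖ +
          ‖(f : Tc → ℂ) (z₁ + w) - (f : Tc → ℂ) (z₂ + w)‖ +
          ‖(f : Tc → ℂ) (z₂ + w) - G ζ' (z₂ + w)‖ + ‖G ζ' (z₂ + w) - G w (z₂ + w)‖ := by
        calc ‖G w (z₁ + w) - G w (z₂ + w)‖ ≤
            ‖G w (z₁ + w) - G ζ' (z₁ + w)‖ + ‖G ζ' (z₁ + w) - G w (z₂ + w)‖ :=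
              norm_sub_le_norm_sub_add_norm_sub _ _ _
          _ ≤ ‖G w (z₁ + w) - G ζ' (z₁ + w)‖ + (‖G ζ' (z₁ + w) - (f : Tc → ℂ) (z₁ + w)‖ +
              ‖(f : Tc → ℂ) (z₁ + w) - G w (z₂ + w)‖) := by
              gcongr
              exact norm_sub_le_norm_sub_add_norm_sub _ _ _
          _ ≤ ‖G w (z₁ + w) - G ζ' (z₁ + w)‖ + (‖G ζ' (z₁ + w) - (f : Tc → ℂ) (z₁ + w)‖ +
              (‖(f : Tc → ℂ) (z₁ + w) - (f : Tc → ℂ) (z₂ + w)‖ +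
               ‖(f : Tc → ℂ) (z₂ + w) - G w (z₂ + w)‖)) := by
              gcongr
              exact norm_sub_le_norm_sub_add_norm_sub _ _ _
          _ ≤ ‖G w (z₁ + w) - G ζ' (z₁ + w)‖ + (‖G ζ' (z₁ + w) - (f : Tc → ℂ) (z₁ + w)‖ +
              (‖(f : Tc → ℂ) (z₁ + w) - (f : Tc → ℂ) (z₂ + w)‖ +
               (‖(f : Tc → ℂ) (z₂ + w) - G ζ' (z₂ + w)‖ + ‖G ζ' (z₂ + w) - G w (z₂ + w)‖))) := by
              gcongr
              exact norm_sub_le_norm_sub_add_norm_sub _ _ _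
          _ = _ := by ring
      have hsymm : ‖G ζ' (z₂ + w) - G w (z₂ + w)‖ = ‖G w (z₂ + w) - G ζ' (z₂ + w)‖ :=
        norm_sub_rev _ _
      calc ‖G w (z₁ + w) - G w (z₂ + w)‖ ≤ _ := t1
        _ ≤ ε₁ + ε₁ + ‖(f : Tc → ℂ) (z₁ + w) - (f : Tc → ℂ) (z₂ + w)‖ + ε₁ + ε₁ := by
            rw [hsymm]
            gcongr
        _ = 4 * ε₁ + ‖(f : Tc → ℂ) (z₁ + w) - (f : Tc → ℂ) (z₂ + w)‖ := by ring
    have hrw : ‖u w (z₁ + w) - u w (z₂ + w)‖ = ‖G w (z₁ + w) - G w (z₂ + w)‖ := by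
      rw [hrep w (z₁ + w), hrep w (z₂ + w)]
    rw [hrw]
    exact hchain.trans (by linarith)
  -- integrability of the dominating function
  have hintT : ∀ f ∈ T, Integrable
      (fun w : Tc => ‖(f : Tc → ℂ) (z₁ + w) - (f : Tc → ℂ) (z₂ + w)‖) (volume : Measure Tc) := by
    intro f _
    have hm1 : AEStronglyMeasurable (fun w : Tc => (f : Tc → ℂ) (z₁ + w)) (volume : Measure Tc) :=
      (Lp.aestronglyMeasurable f).comp_quasiMeasurePreserving (addCM_mp z₁).quasiMeasurePreserving
    have hm2 : AEStronglyMeasurable (fun w : Tc => (f : Tc → ℂ) (z₂ + w)) (volume : Measure Tc) :=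
      (Lp.aestronglyMeasurable f).comp_quasiMeasurePreserving (addCM_mp z₂).quasiMeasurePreserving
    refine Integrable.mono' (integrable_const (2 * ‖f‖)) (hm1.sub hm2).norm ?_
    have h1 := (addCM_mp z₁).quasiMeasurePreserving.ae (ae_bound_Lp f)
    have h2 := (addCM_mp z₂).quasiMeasurePreserving.ae (ae_bound_Lp f)
    filter_upwards [h1, h2] with w hw1 hw2
    have hw1' : ‖(f : Tc → ℂ) (z₁ + w)‖ ≤ ‖f‖ := hw1
    have hw2' : ‖(f : Tc → ℂ) (z₂ + w)‖ ≤ ‖f‖ := hw2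
    rw [norm_norm]
    calc ‖(f : Tc → ℂ) (z₁ + w) - (f : Tc → ℂ) (z₂ + w)‖ ≤
        ‖(f : Tc → ℂ) (z₁ + w)‖ + ‖(f : Tc → ℂ) (z₂ + w)‖ := norm_sub_le _ _
      _ ≤ 2 * ‖f‖ := by linarith [hw1', hw2']
  have hint : Integrable (fun w : Tc =>
      4 * ε₁ + ∑ f ∈ T, ‖(f : Tc → ℂ) (z₁ + w) - (f : Tc → ℂ) (z₂ + w)‖)
      (volume : Measure Tc) :=
    (integrable_const _).add (integrable_finset_sum _ hintT)
  -- conclude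
  calc ∫ w : Tc, ‖u w (z₁ + w) - u w (z₂ + w)‖ ≤
      ∫ w : Tc, (4 * ε₁ + ∑ f ∈ T, ‖(f : Tc → ℂ) (z₁ + w) - (f : Tc → ℂ) (z₂ + w)‖) :=
        integral_mono_of_nonneg (Filter.Eventually.of_forall fun w => norm_nonneg _)
          hint hpt
    _ = 4 * ε₁ * (volume (univ : Set Tc)).toReal +
        ∑ f ∈ T, ∫ w : Tc, ‖(f : Tc → ℂ) (z₁ + w) - (f : Tc → ℂ) (z₂ + w)‖ := by
        rw [integral_add (integrable_const _) (integrable_finset_sum _ hintT),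
          integral_const, integral_finset_sum _ hintT, smul_eq_mul, mul_comm]
        rfl

def trL1 (z : Tc) (f : Lp ℂ 1 (volume : Measure Tc)) : Lp ℂ 1 (volume : Measure Tc) :=
  Lp.compMeasurePreserving (addCM z) (addCM_mp z) f

lemma continuous_addCM : Continuous addCM := by
  have : addCM = ⇑(ContinuousMap.curry ⟨fun p : Tc × Tc => p.1 + p.2, continuous_add⟩) := by
    ext z w; rfl
  rw [this]; exact (ContinuousMap.curry _).continuous

lemma continuous_trL1 (f : Lp ℂ 1 (volume : Measure Tc)) : Continuous fun z => trL1 z f :=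
  Continuous.compMeasurePreservingLp continuous_const continuous_addCM addCM_mp (by simp)

lemma lemA (f : Lp ℂ 1 (volume : Measure Tc)) {ε : ℝ} (hε : 0 < ε) :
    ∃ δ > 0, ∀ z₁ z₂ : Tc, dist z₁ z₂ ≤ δ → ‖trL1 z₁ f - trL1 z₂ f‖ ≤ ε := by
  have h := CompactSpace.uniformContinuous_of_continuous (continuous_trL1 f)
  rw [Metric.uniformContinuous_iff] at h
  obtain ⟨δ, hδ, h⟩ := h ε hε
  refine ⟨δ / 2, by positivity, fun z₁ z₂ hz => ?_⟩
  have := h (a := z₁) (b := z₂) (lt_of_le_of_lt hz (by linarith))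
  rw [dist_eq_norm] at this; exact this.le

def toL1 (f : Lp ℂ ⊤ (volume : Measure Tc)) : Lp ℂ 1 (volume : Measure Tc) :=
  ((Lp.memLp f).mono_exponent le_top).toLp

lemma coeFn_trL1_toL1 (f : Lp ℂ ⊤ (volume : Measure Tc)) (z : Tc) :
    ⇑(trL1 z (toL1 f)) =ᵐ[(volume : Measure Tc)] fun w => (f : Tc → ℂ) (z + w) := by
  have h1 : ⇑(trL1 z (toL1 f)) =ᵐ[(volume : Measure Tc)] fun w => (toL1 f : Tc → ℂ) (z + w) :=
    Lp.coeFn_compMeasurePreserving (toL1 f) (addCM_mp z)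
  have h2 : ⇑(toL1 f) =ᵐ[(volume : Measure Tc)] ⇑f :=
    MemLp.coeFn_toLp _
  have h3 := (addCM_mp z).quasiMeasurePreserving.ae h2
  filter_upwards [h1, h3] with w hw1 hw3
  rw [hw1]; exact hw3

lemma normL1_eq (f : Lp ℂ ⊤ (volume : Measure Tc)) (z₁ z₂ : Tc) :
    ∫ w : Tc, ‖(f : Tc → ℂ) (z₁ + w) - (f : Tc → ℂ) (z₂ + w)‖ =
      ‖trL1 z₁ (toL1 f) - trL1 z₂ (toL1 f)‖ := by
  rw [L1.norm_eq_integral_norm]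
  refine integral_congr_ae ?_
  filter_upwards [coeFn_trL1_toL1 f z₁, coeFn_trL1_toL1 f z₂,
    Lp.coeFn_sub (trL1 z₁ (toL1 f)) (trL1 z₂ (toL1 f))] with w h1 h2 h3
  rw [h3, Pi.sub_apply, h1, h2]


end Aux

/-- If `K` is a relatively compact subset of `L^∞(𝕋)` then
`ρ_K(δ) → 0` as `δ → 0⁺`. -/
theorem stmt1 (K : Set (Lp ℂ ⊤ (volume : Measure Tc))) (hK : IsCompact (closure K)) :
    Tendsto (fun δ : ℝ => rhoK K δ) (nhdsWithin 0 (Set.Ioi 0)) (nhds 0) := by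
  rw [Metric.tendsto_nhdsWithin_nhds]
  intro ε hε
  set κ := (volume (univ : Set Tc)).toReal with hκdef
  have hκ0 : 0 ≤ κ := ENNReal.toReal_nonneg
  set ε₁ : ℝ := ε / (2 * (4 * κ + 1)) with hε₁def
  have hε₁ : 0 < ε₁ := by positivity
  have htb : TotallyBounded K := hK.totallyBounded.subset subset_closure
  obtain ⟨T₀, hT₀fin, hT₀⟩ := (Metric.totallyBounded_iff.1 htb) ε₁ hε₁
  set T := hT₀fin.toFinset with hTdef
  have hnet : ∀ g ∈ K, ∃ f ∈ T, dist g f < ε₁ := by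
    intro g hg
    obtain ⟨f, hf, hd⟩ := mem_iUnion₂.1 (hT₀ hg)
    exact ⟨f, hT₀fin.mem_toFinset.2 hf, by rwa [Metric.mem_ball] at hd⟩
  set ε₂ : ℝ := ε / (2 * ((T.card : ℝ) + 1)) with hε₂def
  have hε₂ : 0 < ε₂ := by positivity
  have hδ : ∃ δ > 0, ∀ f ∈ T, ∀ z₁ z₂ : Tc, dist z₁ z₂ ≤ δ →
      ‖trL1 z₁ (toL1 f) - trL1 z₂ (toL1 f)‖ ≤ ε₂ := by
    have h : ∀ f ∈ T, ∀ᶠ δ in nhdsWithin (0 : ℝ) (Ioi 0), ∀ z₁ z₂ : Tc, dist z₁ z₂ ≤ δ →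
        ‖trL1 z₁ (toL1 f) - trL1 z₂ (toL1 f)‖ ≤ ε₂ := by
      intro f _
      obtain ⟨δf, hδf, hδfP⟩ := lemA (toL1 f) hε₂
      filter_upwards [Ioo_mem_nhdsGT_of_mem ⟨le_refl (0 : ℝ), hδf⟩] with δ hδmem
      intro z₁ z₂ hz
      exact hδfP z₁ z₂ (hz.trans hδmem.2.le)
    have h2 := (Filter.eventually_all_finset T).2 h
    have h3 : ∀ᶠ δ in nhdsWithin (0 : ℝ) (Ioi 0), δ ∈ Ioi (0 : ℝ) :=
      eventually_mem_nhdsWithin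
    obtain ⟨δ, hδpos, hδP⟩ := (h3.and h2).exists
    exact ⟨δ, hδpos, hδP⟩
  obtain ⟨δ, hδpos, hδP⟩ := hδ
  refine ⟨δ, hδpos, ?_⟩
  intro x hx hxd
  rw [Real.dist_eq, sub_zero] at hxd
  have hxδ : x ≤ δ := by
    have : |x| < δ := hxd
    have := abs_lt.1 this
    linarith [this.2]
  -- bound every element of the defining set
  have hbound : ∀ c ∈ {c : ℝ | ∃ u : Tc → Tc → ℂ, MemEK K u ∧ ∃ z₁ z₂ : Tc, dist z₁ z₂ ≤ x ∧
      c = ∫ w : Tc, ‖u w (z₁ + w) - u w (z₂ + w)‖},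
      c ≤ 4 * ε₁ * κ + (T.card : ℝ) * ε₂ := by
    rintro c ⟨u, hu, z₁, z₂, hz, rfl⟩
    have hz' : dist z₁ z₂ ≤ δ := hz.trans hxδ
    refine (keyBound K u hu z₁ z₂ hε₁ T hnet).trans ?_
    have hsum : ∑ f ∈ T, ∫ w : Tc, ‖(f : Tc → ℂ) (z₁ + w) - (f : Tc → ℂ) (z₂ + w)‖ ≤
        (T.card : ℝ) * ε₂ := by
      calc ∑ f ∈ T, ∫ w : Tc, ‖(f : Tc → ℂ) (z₁ + w) - (f : Tc → ℂ) (z₂ + w)‖ ≤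
          ∑ _f ∈ T, ε₂ := by
            refine Finset.sum_le_sum fun f hf => ?_
            rw [normL1_eq]
            exact hδP f hf z₁ z₂ hz'
        _ = (T.card : ℝ) * ε₂ := by rw [Finset.sum_const, nsmul_eq_mul]
    linarith [hsum]
  have hrho_le : rhoK K x ≤ 4 * ε₁ * κ + (T.card : ℝ) * ε₂ :=
    Real.sSup_le hbound (by positivity)
  have hrho_0 : 0 ≤ rhoK K x := by
    refine Real.sSup_nonneg ?_
    rintro c ⟨u, hu, z₁, z₂, hz, rfl⟩
    exact integral_nonneg fun w => norm_nonneg _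
  rw [Real.dist_eq, sub_zero, _root_.abs_of_nonneg hrho_0]
  -- arithmetic
  have key1 : ε₁ * (4 * κ + 1) = ε / 2 := by
    rw [hε₁def]; field_simp
  have h1 : 4 * ε₁ * κ ≤ ε / 2 := by nlinarith [hε₁.le]
  have key2 : ε₂ * ((T.card : ℝ) + 1) = ε / 2 := by
    rw [hε₂def]; field_simp
  have h2 : (T.card : ℝ) * ε₂ < ε / 2 := by nlinarith [hε₂]
  calc rhoK K x ≤ 4 * ε₁ * κ + (T.card : ℝ) * ε₂ := hrho_le
    _ < ε := by linarith
end
end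

section
/- Let K be a relatively compact subset of L^∞(𝕋). Then for each ε > 0 there exist a number δ > 0 and a measurable set U ⊂ 𝕋 with μ(𝕋 \ U) < ε such that, for each f ∈ K, sup{ |f°(z₁) − f°(z₂)| : z₁, z₂ ∈ U ∩ Ω_f, d(z₁,z₂) < δ } ≤ ε, where f° is the canonical representative of f and Ω_f its set of weak canonical Lebesgue points. -/
open MeasureTheory Complex Filter Set
open scoped ENNReal NNReal Topology
noncomputable section

/-- `z` is a weak canonical Lebesgue point of `f`: the limit
`lim_{r→0⁺} (1/2r) ∫_{-r}^r f(z e^{it}) dt` exists. -/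
def WeakLebPt (f : Tc → ℂ) (z : Tc) : Prop :=
  ∃ L : ℂ, Tendsto (fun r : ℝ => (1 / (2 * r) : ℝ) • ∫ t in (-r)..r, f (z + (t : Tc)))
    (nhdsWithin 0 (Set.Ioi 0)) (nhds L)

open Classical in
/-- The canonical representative `f°` of `f`: the above limit at weak canonical Lebesgue
points, and `0` elsewhere. -/
noncomputable def canonRep (f : Tc → ℂ) (z : Tc) : ℂ :=
  if h : WeakLebPt f z then h.choose else 0

section Helpers

open Metric

variable {E : Type*} [NormedAddCommGroup E] [NormedSpace ℝ E]

lemma Tc.volume_closedBall' (z : Tc) {r : ℝ} (h0 : 0 ≤ r) (hr : r ≤ Real.pi) :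
    volume (closedBall z r) = ENNReal.ofReal (2 * r) := by
  rw [AddCircle.volume_closedBall]
  congr 1
  exact min_eq_right (by linarith)

lemma Tc.intervalIntegral_eq (u : Tc → E) (z : Tc) {r : ℝ} (h0 : 0 < r) (hr : r < Real.pi) :
    ∫ t in (-r)..r, u (z + (t : Tc)) = ∫ y in closedBall z r, u y := by
  induction z using QuotientAddGroup.induction_on with
  | H x₀ =>
  have habs : |2 * Real.pi| / 2 = Real.pi := by
    rw [abs_of_pos Real.two_pi_pos]; ring
  have key := AddCircle.integral_preimage (2 * Real.pi) (x₀ - Real.pi)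
    (fun y : Tc => Set.indicator (closedBall ((x₀ : ℝ) : Tc) r) u y)
  have hIoc : x₀ - Real.pi + 2 * Real.pi = x₀ + Real.pi := by ring
  rw [hIoc] at key
  -- RHS of key
  rw [integral_indicator measurableSet_closedBall] at key
  -- LHS of key: rewrite the integrand as indicator of the preimage
  have hind : ∀ a : ℝ, Set.indicator (closedBall ((x₀ : ℝ) : Tc) r) u ((a : ℝ) : Tc)
      = Set.indicator (((↑) : ℝ → Tc) ⁻¹' closedBall ((x₀ : ℝ) : Tc) r)
          (fun a : ℝ => u ((a : ℝ) : Tc)) a := by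
    intro a
    exact (Set.indicator_comp_right ((↑) : ℝ → Tc)
      (s := closedBall ((x₀ : ℝ) : Tc) r) (g := u) (x := a)).symm
  simp only [hind] at key
  rw [setIntegral_indicator (measurableSet_closedBall.preimage (AddCircle.measurable_mk'))] at key
  have hsub : Ioc (x₀ - Real.pi) (x₀ + Real.pi) ⊆ closedBall x₀ (|2 * Real.pi| / 2) := by
    rw [habs, Real.closedBall_eq_Icc]
    exact Ioc_subset_Icc_self
  have hpre := AddCircle.coe_real_preimage_closedBall_inter_eq
    (p := 2 * Real.pi) (x := x₀) (ε := r) (Ioc (x₀ - Real.pi) (x₀ + Real.pi)) hsub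
  rw [if_pos (by rw [habs]; exact hr)] at hpre
  rw [Set.inter_comm, hpre] at key
  have hball : closedBall x₀ r ∩ Ioc (x₀ - Real.pi) (x₀ + Real.pi) = Icc (x₀ - r) (x₀ + r) := by
    rw [Real.closedBall_eq_Icc, inter_eq_left]
    intro y hy
    exact ⟨by linarith [hy.1], by linarith [hy.2]⟩
  rw [hball] at key
  rw [integral_Icc_eq_integral_Ioc] at key
  have h1 : ∫ t in (-r)..r, u (((x₀ : ℝ) : Tc) + (t : Tc)) = ∫ a in Ioc (x₀ - r) (x₀ + r),
      u ((a : ℝ) : Tc) := by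
    have h2 : ∀ t : ℝ, u (((x₀ : ℝ) : Tc) + (t : Tc)) = u (((x₀ + t : ℝ) : Tc)) := by
      intro t; norm_cast
    simp only [h2]
    rw [intervalIntegral.integral_comp_add_left (fun a : ℝ => u ((a : ℝ) : Tc)) x₀,
      intervalIntegral.integral_of_le (by linarith)]
    rw [show x₀ + -r = x₀ - r from by ring]
  rw [h1, key]

lemma Tc.ball_avg_tendsto [CompleteSpace E] (u : Tc → E) (hu : Integrable u volume) :
    ∀ᵐ z ∂(volume : Measure Tc), Tendsto (fun r : ℝ => ⨍ y in closedBall z r, u y ∂volume)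
      (nhdsWithin 0 (Set.Ioi 0)) (nhds (u z)) := by
  filter_upwards [IsUnifLocDoublingMeasure.ae_tendsto_average (volume : Measure Tc)
    (hu.locallyIntegrable) 1] with z hz
  refine hz (fun _ : ℝ => z) id tendsto_id ?_
  filter_upwards [self_mem_nhdsWithin] with r (hr : 0 < r)
  exact mem_closedBall_self (by simp only [one_mul, id_eq]; exact hr.le)

lemma Tc.cont_integrable (h : Tc → ℂ) (hc : Continuous h) : Integrable h volume :=
  hc.integrable_of_hasCompactSupport
    (IsCompact.of_isClosed_subset isCompact_univ (isClosed_tsupport h) (subset_univ _))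

lemma Tc.key_est {c : ℝ} (f g h : Tc → ℂ) (hfi : Integrable f volume)
    (hgi : Integrable g volume) (hhi : Integrable h volume)
    (hfg : ∀ᵐ x ∂(volume : Measure Tc), ‖f x - g x‖ ≤ c)
    {z : Tc} (hz : WeakLebPt f z)
    (h1 : Tendsto (fun r : ℝ => ⨍ y in closedBall z r, ‖g y - h y‖ ∂volume)
      (nhdsWithin 0 (Set.Ioi 0)) (nhds ‖g z - h z‖))
    (h2 : Tendsto (fun r : ℝ => ⨍ y in closedBall z r, h y ∂volume)
      (nhdsWithin 0 (Set.Ioi 0)) (nhds (h z))) :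
    ‖canonRep f z - h z‖ ≤ c + ‖g z - h z‖ := by
  have hcan : Tendsto (fun r : ℝ => (1 / (2 * r) : ℝ) • ∫ t in (-r)..r, f (z + (t : Tc)))
      (nhdsWithin 0 (Set.Ioi 0)) (nhds (canonRep f z)) := by
    rw [canonRep, dif_pos hz]; exact hz.choose_spec
  have hΦ : Tendsto (fun r : ℝ =>
      ‖((1 / (2 * r) : ℝ) • ∫ t in (-r)..r, f (z + (t : Tc)))
        - ⨍ y in closedBall z r, h y ∂volume‖)
      (nhdsWithin 0 (Set.Ioi 0)) (nhds ‖canonRep f z - h z‖) := (hcan.sub h2).norm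
  have hΨ : Tendsto (fun r : ℝ => c + ⨍ y in closedBall z r, ‖g y - h y‖ ∂volume)
      (nhdsWithin 0 (Set.Ioi 0)) (nhds (c + ‖g z - h z‖)) := tendsto_const_nhds.add h1
  refine le_of_tendsto_of_tendsto hΦ hΨ ?_
  filter_upwards [Ioo_mem_nhdsGT_of_mem ⟨le_refl 0, Real.pi_pos⟩] with r hr
  obtain ⟨hr0, hrπ⟩ := hr
  have h2r : (0 : ℝ) < 2 * r := by linarith
  have hM : volume.real (closedBall z r) = 2 * r := by
    rw [measureReal_def, Tc.volume_closedBall' z hr0.le hrπ.le, ENNReal.toReal_ofReal h2r.le]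
  have hμfin : volume (closedBall z r) < ⊤ := by
    rw [Tc.volume_closedBall' z hr0.le hrπ.le]; exact ENNReal.ofReal_lt_top
  have havg : (1 / (2 * r) : ℝ) • ∫ t in (-r)..r, f (z + (t : Tc))
      = ⨍ y in closedBall z r, f y ∂volume := by
    rw [Tc.intervalIntegral_eq f z hr0 hrπ, setAverage_eq, hM, one_div]
  rw [havg]
  simp only [setAverage_eq, hM]
  rw [← smul_sub]
  have e1 : (∫ y in closedBall z r, f y ∂volume) - ∫ y in closedBall z r, h y ∂volume
      = (∫ y in closedBall z r, (f y - g y) ∂volume)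
        + ∫ y in closedBall z r, (g y - h y) ∂volume := by
    rw [integral_sub hfi.integrableOn hgi.integrableOn,
      integral_sub hgi.integrableOn hhi.integrableOn]
    ring
  have e2 : ‖∫ y in closedBall z r, (f y - g y) ∂volume‖ ≤ c * (2 * r) := by
    have := norm_setIntegral_le_of_norm_le_const_ae (C := c) (s := closedBall z r)
      (f := fun y => f y - g y) hμfin (ae_restrict_of_ae hfg)
    rwa [hM] at this
  have e3 : ‖∫ y in closedBall z r, (g y - h y) ∂volume‖
      ≤ ∫ y in closedBall z r, ‖g y - h y‖ ∂volume := norm_integral_le_integral_norm _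
  rw [norm_smul, Real.norm_of_nonneg (by positivity : (0:ℝ) ≤ (2*r)⁻¹), e1, smul_eq_mul]
  calc (2*r)⁻¹ * ‖(∫ y in closedBall z r, (f y - g y) ∂volume)
        + ∫ y in closedBall z r, (g y - h y) ∂volume‖
      ≤ (2*r)⁻¹ * (c * (2*r) + ∫ y in closedBall z r, ‖g y - h y‖ ∂volume) := by
        gcongr
        exact (norm_add_le _ _).trans (by gcongr)
    _ = c + (2*r)⁻¹ * ∫ y in closedBall z r, ‖g y - h y‖ ∂volume := by
        field_simp
  done

lemma Tc.small_set (u : Tc → ℂ) (hu : AEStronglyMeasurable u (volume : Measure Tc))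
    {θ b : ℝ} (hθ : 0 < θ)
    (hb : eLpNorm u 1 volume ≤ ENNReal.ofReal (θ * b)) :
    volume {z : Tc | θ < ‖u z‖} ≤ ENNReal.ofReal b := by
  have h1 : {z : Tc | θ < ‖u z‖} ⊆ {z : Tc | ENNReal.ofReal θ ≤ (‖u z‖₊ : ℝ≥0∞)} := by
    intro z hz
    simp only [mem_setOf_eq] at hz ⊢
    rw [← enorm_eq_nnnorm, ← ofReal_norm]
    exact ENNReal.ofReal_le_ofReal hz.le
  have h2 := mul_meas_ge_le_lintegral₀ (μ := (volume : Measure Tc))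
    (f := fun z => (‖u z‖₊ : ℝ≥0∞)) hu.enorm (ENNReal.ofReal θ)
  rw [eLpNorm_one_eq_lintegral_enorm] at hb
  have h3 : ENNReal.ofReal θ * volume {z : Tc | θ < ‖u z‖}
      ≤ ENNReal.ofReal θ * ENNReal.ofReal b := by
    calc ENNReal.ofReal θ * volume {z : Tc | θ < ‖u z‖}
        ≤ ENNReal.ofReal θ * volume {z : Tc | ENNReal.ofReal θ ≤ (‖u z‖₊ : ℝ≥0∞)} :=
          mul_le_mul_right (measure_mono h1) _
      _ ≤ ∫⁻ z, (‖u z‖₊ : ℝ≥0∞) ∂volume := h2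
      _ ≤ ENNReal.ofReal (θ * b) := hb
      _ = ENNReal.ofReal θ * ENNReal.ofReal b := ENNReal.ofReal_mul hθ.le
  exact (ENNReal.mul_le_mul_iff_right (by simp [hθ]) ENNReal.ofReal_ne_top).mp h3

lemma Tc.ae_bound (f g : Lp ℂ ⊤ (volume : Measure Tc)) {c : ℝ} (hd : dist f g ≤ c) :
    ∀ᵐ x ∂(volume : Measure Tc), ‖(f : Tc → ℂ) x - (g : Tc → ℂ) x‖ ≤ c := by
  have hfin : eLpNorm (⇑f - ⇑g) ⊤ (volume : Measure Tc) < ⊤ := by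
    rw [eLpNorm_congr_ae (Lp.coeFn_sub f g).symm]
    exact Lp.eLpNorm_lt_top (f - g)
  rw [eLpNorm_exponent_top] at hfin
  rw [Lp.dist_def, eLpNorm_exponent_top] at hd
  filter_upwards [ae_le_eLpNormEssSup (f := ⇑f - ⇑g) (μ := (volume : Measure Tc))] with x hx
  have h1 : ‖(⇑f - ⇑g) x‖ ≤ (eLpNormEssSup (⇑f - ⇑g) (volume : Measure Tc)).toReal := by
    rw [← coe_nnnorm, ← ENNReal.coe_toReal]
    exact ENNReal.toReal_mono hfin.ne hx
  exact h1.trans hd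

end Helpers

/-- **Statement 2** (Lemma qaa).  Let `K` be a relatively compact subset of `L^∞(𝕋)`.  Then
for each `ε > 0` there are `δ > 0` and a measurable `U ⊆ 𝕋` with `μ(𝕋 \ U) < ε` such that
for each `f ∈ K`, `sup{|f°(z₁) - f°(z₂)| : z₁, z₂ ∈ U ∩ Ω_f, d(z₁,z₂) < δ} ≤ ε`. -/
theorem stmt2 (K : Set (Lp ℂ ⊤ (volume : Measure Tc))) (hK : IsCompact (closure K)) :
    ∀ ε > (0 : ℝ), ∃ δ > (0 : ℝ), ∃ U : Set Tc, MeasurableSet U ∧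
      volume Uᶜ < ENNReal.ofReal ε ∧
      ∀ f ∈ K, ∀ z₁ z₂ : Tc,
        z₁ ∈ U → WeakLebPt (f : Tc → ℂ) z₁ →
        z₂ ∈ U → WeakLebPt (f : Tc → ℂ) z₂ →
        dist z₁ z₂ < δ →
        ‖canonRep (f : Tc → ℂ) z₁ - canonRep (f : Tc → ℂ) z₂‖ ≤ ε := by

  intro ε hε
  classical
  set ε6 : ℝ := ε / 6 with hε6
  have hε6pos : 0 < ε6 := by positivity
  obtain ⟨t, htfin, htcov⟩ := (Metric.totallyBounded_iff.mp
    ((hK.totallyBounded).subset subset_closure)) ε6 hε6pos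
  set s : Finset (Lp ℂ ⊤ (volume : Measure Tc)) := htfin.toFinset with hs
  obtain ⟨n, hn⟩ : ∃ n : ℕ, s.card = n := ⟨s.card, rfl⟩
  set b : ℝ := ε / (2 * (n + 1)) with hb
  have hbpos : 0 < b := by positivity
  have hInt : ∀ φ : Lp ℂ ⊤ (volume : Measure Tc), Integrable (⇑φ) volume :=
    fun φ => (Lp.memLp φ).integrable le_top
  have happrox : ∀ φ : Lp ℂ ⊤ (volume : Measure Tc), ∃ h : Tc → ℂ, Continuous h ∧
      eLpNorm ((φ : Tc → ℂ) - h) 1 volume ≤ ENNReal.ofReal (ε6 * b) := by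
    intro φ
    obtain ⟨g, hg, -⟩ :=
      ((Lp.memLp φ).mono_exponent (le_top)).exists_boundedContinuous_eLpNorm_sub_le
        (by simp : (1 : ℝ≥0∞) ≠ ∞)
        ((ENNReal.ofReal_pos.mpr (by positivity : (0:ℝ) < ε6 * b)).ne')
    exact ⟨⇑g, g.continuous, hg⟩
  choose H Hcont Hnorm using happrox
  have HInt : ∀ φ, Integrable (H φ) volume := fun φ => Tc.cont_integrable _ (Hcont φ)
  have hmod : ∀ φ : Lp ℂ ⊤ (volume : Measure Tc), ∃ d : ℝ, 0 < d ∧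
      ∀ a b' : Tc, dist a b' < d → ‖H φ a - H φ b'‖ ≤ ε6 := by
    intro φ
    obtain ⟨d, dpos, hd⟩ := Metric.uniformContinuous_iff.mp
      (CompactSpace.uniformContinuous_of_continuous (Hcont φ)) ε6 hε6pos
    refine ⟨d, dpos, fun a b' hab => ?_⟩
    have := hd hab
    rw [dist_eq_norm] at this
    exact this.le
  choose D Dpos Dprop using hmod
  set P : Lp ℂ ⊤ (volume : Measure Tc) → Tc → Prop := fun φ z =>
    (Tendsto (fun r : ℝ => ⨍ y in Metric.closedBall z r, ‖(φ : Tc → ℂ) y - H φ y‖ ∂volume)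
      (nhdsWithin 0 (Set.Ioi 0)) (nhds ‖(φ : Tc → ℂ) z - H φ z‖)) ∧
    (Tendsto (fun r : ℝ => ⨍ y in Metric.closedBall z r, H φ y ∂volume)
      (nhdsWithin 0 (Set.Ioi 0)) (nhds (H φ z))) with hP
  have hPae : ∀ φ, ∀ᵐ z ∂(volume : Measure Tc), P φ z := by
    intro φ
    have ha := Tc.ball_avg_tendsto (fun y => ‖(φ : Tc → ℂ) y - H φ y‖)
      (((hInt φ).sub (HInt φ)).norm)
    have hb' := Tc.ball_avg_tendsto (H φ) (HInt φ)
    filter_upwards [ha, hb'] with z h1 h2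
    exact ⟨h1, h2⟩
  set N : Lp ℂ ⊤ (volume : Measure Tc) → Set Tc :=
    fun φ => toMeasurable volume {z : Tc | ¬ P φ z} with hNdef
  set M : Lp ℂ ⊤ (volume : Measure Tc) → Set Tc :=
    fun φ => toMeasurable volume {z : Tc | ε6 < ‖(φ : Tc → ℂ) z - H φ z‖} with hMdef
  have hNnull : ∀ φ, volume (N φ) = 0 := by
    intro φ
    rw [hNdef, measure_toMeasurable]
    exact hPae φ
  have hMsmall : ∀ φ, volume (M φ) ≤ ENNReal.ofReal b := by
    intro φ
    rw [hMdef, measure_toMeasurable]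
    exact Tc.small_set _ ((Lp.aestronglyMeasurable φ).sub (Hcont φ).aestronglyMeasurable)
      hε6pos (Hnorm φ)
  refine ⟨if hne : s.Nonempty then s.inf' hne D else 1, ?_, (⋃ φ ∈ s, (N φ ∪ M φ))ᶜ, ?_, ?_, ?_⟩
  · split
    · next hne => exact (Finset.lt_inf'_iff _).mpr fun φ _ => Dpos φ
    · exact one_pos
  · exact (MeasurableSet.biUnion s.countable_toSet
      (fun φ _ => (measurableSet_toMeasurable _ _).union (measurableSet_toMeasurable _ _))).compl
  · rw [compl_compl]
    calc volume (⋃ φ ∈ s, (N φ ∪ M φ)) ≤ ∑ φ ∈ s, volume (N φ ∪ M φ) :=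
        measure_biUnion_finset_le s _
      _ ≤ ∑ _φ ∈ s, ENNReal.ofReal b := Finset.sum_le_sum (fun φ _ =>
          (measure_union_le _ _).trans (by rw [hNnull φ, zero_add]; exact hMsmall φ))
      _ = (n : ℝ≥0∞) * ENNReal.ofReal b := by rw [Finset.sum_const, hn, nsmul_eq_mul]
      _ < ENNReal.ofReal ε := by
          rw [show ((n : ℝ≥0∞)) = ENNReal.ofReal n from (ENNReal.ofReal_natCast n).symm,
            ← ENNReal.ofReal_mul (Nat.cast_nonneg n)]
          refine (ENNReal.ofReal_lt_ofReal_iff hε).mpr ?_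
          have h2 : (0:ℝ) < 2*((n:ℝ)+1) := by positivity
          rw [hb, mul_div_assoc', div_lt_iff₀ h2]
          nlinarith [Nat.cast_nonneg (α := ℝ) n, hε]
  · intro f hf z₁ z₂ hz₁U hz₁W hz₂U hz₂W hdist
    obtain ⟨φ, hφt, hfφ⟩ := Set.mem_iUnion₂.mp (htcov hf)
    have hφs : φ ∈ s := htfin.mem_toFinset.mpr hφt
    have hdistφ : dist f φ < ε6 := Metric.mem_ball.mp hfφ
    have hae := Tc.ae_bound f φ hdistφ.le
    have hz₁' : z₁ ∉ N φ ∪ M φ := fun hmem => hz₁U (Set.mem_biUnion hφs hmem)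
    have hz₂' : z₂ ∉ N φ ∪ M φ := fun hmem => hz₂U (Set.mem_biUnion hφs hmem)
    have hP1 : P φ z₁ := by
      by_contra hc
      exact hz₁' (Set.mem_union_left _ (subset_toMeasurable _ _ hc))
    have hP2 : P φ z₂ := by
      by_contra hc
      exact hz₂' (Set.mem_union_left _ (subset_toMeasurable _ _ hc))
    have hM1 : ‖(φ : Tc → ℂ) z₁ - H φ z₁‖ ≤ ε6 := by
      by_contra hc
      exact hz₁' (Set.mem_union_right _ (subset_toMeasurable _ _ (lt_of_not_ge hc)))
    have hM2 : ‖(φ : Tc → ℂ) z₂ - H φ z₂‖ ≤ ε6 := by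
      by_contra hc
      exact hz₂' (Set.mem_union_right _ (subset_toMeasurable _ _ (lt_of_not_ge hc)))
    have est1 : ‖canonRep (⇑f) z₁ - H φ z₁‖ ≤ ε6 + ε6 := by
      have := Tc.key_est (⇑f) (⇑φ) (H φ) (hInt f) (hInt φ) (HInt φ) hae hz₁W hP1.1 hP1.2
      linarith
    have est2 : ‖canonRep (⇑f) z₂ - H φ z₂‖ ≤ ε6 + ε6 := by
      have := Tc.key_est (⇑f) (⇑φ) (H φ) (hInt f) (hInt φ) (HInt φ) hae hz₂W hP2.1 hP2.2
      linarith
    have hHd : ‖H φ z₁ - H φ z₂‖ ≤ ε6 := by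
      apply Dprop φ z₁ z₂
      have hδle : (if hne : s.Nonempty then s.inf' hne D else 1) ≤ D φ := by
        rw [dif_pos ⟨φ, hφs⟩]
        exact Finset.inf'_le _ hφs
      exact lt_of_lt_of_le hdist hδle
    calc ‖canonRep (⇑f) z₁ - canonRep (⇑f) z₂‖
        ≤ ‖canonRep (⇑f) z₁ - H φ z₁‖ + ‖H φ z₁ - H φ z₂‖ + ‖H φ z₂ - canonRep (⇑f) z₂‖ := by
          have := dist_triangle4 (canonRep (⇑f) z₁) (H φ z₁) (H φ z₂) (canonRep (⇑f) z₂)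
          simpa [dist_eq_norm] using this
      _ ≤ (ε6 + ε6) + ε6 + (ε6 + ε6) := by
          refine add_le_add (add_le_add est1 hHd) ?_
          rw [norm_sub_rev]
          exact est2
      _ ≤ ε := by rw [hε6]; linarith
end
end
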